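/- Let G be a group, H a subgroup of G, and let g = (g₁,…,g_n) and ĝ = (ĝ₁,…,ĝ_n) be n-tuples of elements of G. Suppose the full derivatives of the two tuples coincide, i.e., for every j ∈ {1,…,n} (indices taken cyclically, so g_{n+1} = g₁) the subsets g_j⁻¹ H g_{j+1} and ĝ_j⁻¹ H ĝ_{j+1} of G are equal. Then θ := ĝ₁ g₁⁻¹ normalizes H, and for every j, H ĝ_j = H θ g_j; that is, the tuple of right cosets (Hĝ₁,…,Hĝ_n) is obtained from (Hg₁,…,Hg_n) by left multiplication by θ. -/

import Mathlib

open Pointwise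

/-- Let `H ≤ G` and let `g, g' : Fin n → G` be two `n`-tuples (indices taken
cyclically).  If the full derivatives coincide, i.e. `gⱼ⁻¹ H g_{j+1} = g'ⱼ⁻¹ H g'_{j+1}` for
all `j`, then `θ := g'₀ g₀⁻¹` normalizes `H` and `H g'ⱼ = H (θ gⱼ)` for every `j`, i.e. the
tuple of right cosets of `g'` is obtained from that of `g` by left multiplication by `θ`. -/
theorem stmt_3 {G : Type*} [Group G] (H : Subgroup G) {n : ℕ} [NeZero n]
    (g g' : Fin n → G)
    (hder : ∀ j : Fin n,
      (fun h => (g j)⁻¹ * h * g (j + 1)) '' (H : Set G) =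
        (fun h => (g' j)⁻¹ * h * g' (j + 1)) '' (H : Set G)) :
    g' 0 * (g 0)⁻¹ ∈ Subgroup.normalizer (H : Set G) ∧
      ∀ j : Fin n, (H : Set G) * {g' j} = (H : Set G) * {g' 0 * (g 0)⁻¹ * g j} := by
  set t : Fin n → G := fun j => g' j * (g j)⁻¹ with ht
  -- forward transport: t j * h * (t (j+1))⁻¹ ∈ H for h ∈ H
  have h1 : ∀ j : Fin n, ∀ h ∈ H, t j * h * (t (j + 1))⁻¹ ∈ H := by
    intro j h hh
    have hm : (g j)⁻¹ * h * g (j + 1) ∈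
        (fun h => (g' j)⁻¹ * h * g' (j + 1)) '' (H : Set G) := by
      rw [← hder j]; exact ⟨h, hh, rfl⟩
    obtain ⟨h', hh', heq⟩ := hm
    have : t j * h * (t (j + 1))⁻¹ = h' := by
      simp only [ht]
      have : h' = g' j * ((g' j)⁻¹ * h' * g' (j + 1)) * (g' (j + 1))⁻¹ := by group
      rw [this, show (g' j)⁻¹ * h' * g' (j + 1) = (g j)⁻¹ * h * g (j + 1) from heq]; group
    rw [this]; exact hh'
  -- reverse transport: (t j)⁻¹ * h' * t (j+1) ∈ H for h' ∈ H
  have h2 : ∀ j : Fin n, ∀ h' ∈ H, (t j)⁻¹ * h' * t (j + 1) ∈ H := by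
    intro j h' hh'
    have hm : (g' j)⁻¹ * h' * g' (j + 1) ∈
        (fun h => (g j)⁻¹ * h * g (j + 1)) '' (H : Set G) := by
      rw [hder j]; exact ⟨h', hh', rfl⟩
    obtain ⟨h, hh, heq⟩ := hm
    have : (t j)⁻¹ * h' * t (j + 1) = h := by
      simp only [ht]
      have : h = g j * ((g j)⁻¹ * h * g (j + 1)) * (g (j + 1))⁻¹ := by group
      rw [this, show (g j)⁻¹ * h * g (j + 1) = (g' j)⁻¹ * h' * g' (j + 1) from heq]; group
    rw [this]; exact hh
  -- a j := t j * (t (j+1))⁻¹ ∈ H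
  have ha : ∀ j : Fin n, t j * (t (j + 1))⁻¹ ∈ H := by
    intro j
    have := h1 j 1 H.one_mem
    rwa [mul_one] at this
  -- each t j normalizes H
  have hnorm : ∀ j : Fin n, t j ∈ Subgroup.normalizer (H : Set G) := by
    intro j
    rw [Subgroup.mem_normalizer_iff]
    intro h
    constructor
    · intro hh
      have := H.mul_mem (h1 j h hh) (H.inv_mem (ha j))
      have e : t j * h * (t (j + 1))⁻¹ * (t j * (t (j + 1))⁻¹)⁻¹ = t j * h * (t j)⁻¹ := by
        group
      rwa [e] at this
    · intro hx
      have hx' : t j * h * (t j)⁻¹ * (t j * (t (j + 1))⁻¹) ∈ H :=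
        H.mul_mem hx (ha j)
      have := h2 j _ hx'
      have e : (t j)⁻¹ * (t j * h * (t j)⁻¹ * (t j * (t (j + 1))⁻¹)) * t (j + 1) = h := by
        group
      rwa [e] at this
  -- chain: t j * (t 0)⁻¹ ∈ H for all j
  letI : NatCast (Fin n) := Fin.NatCast.instNatCast n
  have chainNat : ∀ k : ℕ, t ((k : Fin n)) * (t 0)⁻¹ ∈ H := by
    intro k
    induction k with
    | zero => simpa using H.one_mem
    | succ k ih =>
      have hcast : ((k + 1 : ℕ) : Fin n) = (k : Fin n) + 1 := by
        apply Fin.ext; rw [Fin.val_add, Fin.val_one']; show (k + 1) % n = (k % n + 1 % n) % n; simp [Nat.add_mod]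
      rw [hcast]
      have := H.mul_mem (H.inv_mem (ha (k : Fin n))) ih
      have e : (t (k : Fin n) * (t ((k : Fin n) + 1))⁻¹)⁻¹ * (t (k : Fin n) * (t 0)⁻¹) =
          t ((k : Fin n) + 1) * (t 0)⁻¹ := by group
      rwa [e] at this
  have chain : ∀ j : Fin n, t j * (t 0)⁻¹ ∈ H := by
    intro j
    have := chainNat j.val
    rwa [Fin.cast_val_eq_self] at this
  refine ⟨hnorm 0, ?_⟩
  intro j
  ext x
  simp only [Set.mem_mul, Set.mem_singleton_iff, SetLike.mem_coe, exists_eq_right, exists_eq_left]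
  constructor
  · rintro ⟨h, hh, rfl⟩
    refine ⟨h * (t j * (t 0)⁻¹), H.mul_mem hh (chain j), ?_⟩
    have : g' j = t j * g j := by simp [ht]
    rw [this]; simp only [ht]; group
  · rintro ⟨h, hh, rfl⟩
    refine ⟨h * (t j * (t 0)⁻¹)⁻¹, H.mul_mem hh (H.inv_mem (chain j)), ?_⟩
    have : g' j = t j * g j := by simp [ht]
    rw [this]; simp only [ht]; group
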